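/- The function F(n₁, n₂) = 3 − √(1 − n₁²) − √(1 − n₂²) − √(n₁² + n₂²) on the closed unit disk attains its maximum value 1 exactly at the points (0,0), (±1, 0), and (0, ±1). -/
import Mathlib

lemma aux_le (t : ℝ) (h0 : 0 ≤ t) (h1 : t ≤ 1) : t ≤ Real.sqrt t := by
  nlinarith [Real.sq_sqrt h0, Real.sqrt_nonneg t, Real.sqrt_le_one.2 h1]

lemma aux_eq (t : ℝ) (h0 : 0 ≤ t) (h : Real.sqrt t = t) : t = 0 ∨ t = 1 := by
  have h2 : t ^ 2 = t := by
    have := Real.sq_sqrt h0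
    rw [h] at this; linarith [this]
  rcases mul_eq_zero.1 (show t * (t - 1) = 0 by nlinarith) with h' | h'
  · left; exact h'
  · right; linarith

/-- The cube surface energy
`F(n₁,n₂) = 3 − √(1−n₁²) − √(1−n₂²) − √(n₁²+n₂²)` on the closed unit disk attains
its maximum value `1` exactly at `(0,0)`, `(±1,0)`, `(0,±1)`. -/
theorem stmt13 (F : ℝ → ℝ → ℝ)
    (hF : F = fun x y =>
      3 - Real.sqrt (1 - x ^ 2) - Real.sqrt (1 - y ^ 2) - Real.sqrt (x ^ 2 + y ^ 2)) :
    (∀ x y : ℝ, x ^ 2 + y ^ 2 ≤ 1 → F x y ≤ 1) ∧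
    (∀ x y : ℝ, x ^ 2 + y ^ 2 ≤ 1 →
      (F x y = 1 ↔
        (x = 0 ∧ y = 0) ∨ (x = 1 ∧ y = 0) ∨ (x = -1 ∧ y = 0) ∨
        (x = 0 ∧ y = 1) ∨ (x = 0 ∧ y = -1))) := by
  subst hF
  have hx2 : ∀ x : ℝ, (0:ℝ) ≤ x ^ 2 := fun x => sq_nonneg x
  have key : ∀ x y : ℝ, x ^ 2 + y ^ 2 ≤ 1 →
      (1 - x ^ 2) + (1 - y ^ 2) + (x ^ 2 + y ^ 2) ≤
        Real.sqrt (1 - x ^ 2) + Real.sqrt (1 - y ^ 2) + Real.sqrt (x ^ 2 + y ^ 2) := by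
    intro x y h
    have h1 := aux_le (1 - x ^ 2) (by nlinarith [hx2 y]) (by nlinarith [hx2 x])
    have h2 := aux_le (1 - y ^ 2) (by nlinarith [hx2 x]) (by nlinarith [hx2 y])
    have h3 := aux_le (x ^ 2 + y ^ 2) (by positivity) h
    linarith
  constructor
  · intro x y h
    have := key x y h
    simp only []
    linarith
  · intro x y h
    constructor
    · intro hE
      simp only [] at hE
      have h1 := aux_le (1 - x ^ 2) (by nlinarith [hx2 y]) (by nlinarith [hx2 x])
      have h2 := aux_le (1 - y ^ 2) (by nlinarith [hx2 x]) (by nlinarith [hx2 y])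
      have h3 := aux_le (x ^ 2 + y ^ 2) (by positivity) h
      have e1 : Real.sqrt (1 - x ^ 2) = 1 - x ^ 2 := by linarith
      have e2 : Real.sqrt (1 - y ^ 2) = 1 - y ^ 2 := by linarith
      have e3 : Real.sqrt (x ^ 2 + y ^ 2) = x ^ 2 + y ^ 2 := by linarith
      have c1 := aux_eq _ (by nlinarith [hx2 y]) e1
      have c2 := aux_eq _ (by nlinarith [hx2 x]) e2
      have c3 := aux_eq _ (by positivity) e3
      -- x^2 ∈ {0,1}, y^2 ∈ {0,1}, x^2+y^2 ∈ {0,1}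
      rcases c1 with c1 | c1 <;> rcases c2 with c2 | c2
      · -- x^2 = 1, y^2 = 1 : contradiction
        exfalso; nlinarith
      · -- x^2 = 1, y^2 = 0
        have hy : y = 0 := by nlinarith
        have : (x - 1) * (x + 1) = 0 := by nlinarith
        rcases mul_eq_zero.1 this with h' | h'
        · right; left; exact ⟨by linarith, hy⟩
        · right; right; left; exact ⟨by linarith, hy⟩
      · -- x^2 = 0, y^2 = 1
        have hxz : x = 0 := by nlinarith
        have : (y - 1) * (y + 1) = 0 := by nlinarith
        rcases mul_eq_zero.1 this with h' | h'
        · right; right; right; left; exact ⟨hxz, by linarith⟩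
        · right; right; right; right; exact ⟨hxz, by linarith⟩
      · left; exact ⟨by nlinarith, by nlinarith⟩
    · rintro (⟨hx, hy⟩ | ⟨hx, hy⟩ | ⟨hx, hy⟩ | ⟨hx, hy⟩ | ⟨hx, hy⟩) <;> subst hx <;> subst hy <;>
        norm_num [Real.sqrt_one]
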